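/- Conditional distribution of compliance types given covariates: let X : Ω → ℝ^k be a measurable covariate vector with generated σ-algebra 𝔪 = σ(X), and suppose: (i) the collection of all potential treatment statuses (D_i(z,z'))_{z,z'} is conditionally independent of (Z_i,Z_j) given 𝔪; (ii) almost surely D_i(1,1) ≥ D_i(1,0) ≥ D_i(0,1) ≥ D_i(0,0) and D_i(0,0) = D_i(0,1) = 0; (iii) p_{10}, p_{11} : Ω → ℝ are 𝔪-measurable with p_{10} = E[1{Z_i=1, Z_j=0} | 𝔪], p_{11} = E[1{Z_i=1, Z_j=1} | 𝔪] almost surely. Then almost surely E[ D_i · 1{Z_i=1, Z_j=0} | 𝔪 ] = E[ 1_{C_i} | 𝔪 ] · p_{10} and E[ D_i · 1{Z_i=1, Z_j=1} | 𝔪 ] = ( E[ 1_{C_i} | 𝔪 ] + E[ 1_{GC_i} | 𝔪 ] ) · p_{11}; i.e., P[C_i | X] = E[D_i | Z_i=1, Z_j=0, X] and P[GC_i | X] = E[D_i | Z_i=1, Z_j=1, X] − E[D_i | Z_i=1, Z_j=0, X]. -/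

import Mathlib

open MeasureTheory ProbabilityTheory

noncomputable def bInd (b : Bool) : ℝ := if b then 1 else 0

theorem stmt_16
    {Ω : Type*} [mΩ : MeasurableSpace Ω] [StandardBorelSpace Ω] [Nonempty Ω]
    (P : Measure Ω) [IsProbabilityMeasure P]
    {k : ℕ} (X : Ω → (Fin k → ℝ)) (hX : Measurable X)
    (Di : Bool → Bool → Ω → Bool) (Zi Zj : Ω → Bool)
    (hDimeas : ∀ z z', Measurable (Di z z'))
    (hZi : Measurable Zi) (hZj : Measurable Zj)
    (m : MeasurableSpace Ω)
    (hm_def : m = MeasurableSpace.comap X inferInstance)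
    (hm_le : m ≤ mΩ)
    (hCI : CondIndepFun m hm_le
      (fun ω => (fun z z' => Di z z' ω))
      (fun ω => (Zi ω, Zj ω)) P)
    (hmono : ∀ᵐ ω ∂P,
      Di false false ω ≤ Di false true ω ∧ Di false true ω ≤ Di true false ω ∧
        Di true false ω ≤ Di true true ω)
    (hosn : ∀ᵐ ω ∂P, Di false false ω = false ∧ Di false true ω = false)
    (p10 p11 : Ω → ℝ)
    (hp10meas : Measurable[m] p10) (hp11meas : Measurable[m] p11)
    (hp10 : p10 =ᵐ[P]
      P[(fun ω => Set.indicator ({x | Zi x = true} ∩ {x | Zj x = false}) (fun _ => (1:ℝ)) ω)|m])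
    (hp11 : p11 =ᵐ[P]
      P[(fun ω => Set.indicator ({x | Zi x = true} ∩ {x | Zj x = true}) (fun _ => (1:ℝ)) ω)|m])
    :
    P[(fun ω => bInd (Di (Zi ω) (Zj ω) ω) * Set.indicator ({x | Zi x = true} ∩ {x | Zj x = false}) (fun _ => (1:ℝ)) ω)|m]
      =ᵐ[P] (fun ω => (P[(fun ω' => Set.indicator ({x | Di true false x = true ∧ Di false true x = false}) (fun _ => (1:ℝ)) ω')|m]) ω * p10 ω)
    ∧ P[(fun ω => bInd (Di (Zi ω) (Zj ω) ω) * Set.indicator ({x | Zi x = true} ∩ {x | Zj x = true}) (fun _ => (1:ℝ)) ω)|m]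
      =ᵐ[P] (fun ω => ((P[(fun ω' => Set.indicator ({x | Di true false x = true ∧ Di false true x = false}) (fun _ => (1:ℝ)) ω')|m]) ω + (P[(fun ω' => Set.indicator ({x | Di true true x = true ∧ Di true false x = false}) (fun _ => (1:ℝ)) ω')|m]) ω) * p11 ω) := by
  classical
  letI : MeasurableSpace Ω := mΩ
  -- measurability of the tuple maps
  have hDmeas : Measurable[mΩ] (fun ω => (fun z z' => Di z z' ω)) :=
    measurable_pi_lambda _ fun z => measurable_pi_lambda _ fun z' => hDimeas z z'
  have hZmeas : Measurable[mΩ] (fun ω => (Zi ω, Zj ω)) := hZi.prodMk hZj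
  have hkey := (condIndepFun_iff (m' := m) (hm' := hm_le) _ _ hDmeas hZmeas P).mp hCI
  -- the relevant sets
  set A10 : Set Ω := {ω | Di true false ω = true} with hA10
  set A11 : Set Ω := {ω | Di true true ω = true} with hA11
  set B10 : Set Ω := {x | Zi x = true} ∩ {x | Zj x = false} with hB10
  set B11 : Set Ω := {x | Zi x = true} ∩ {x | Zj x = true} with hB11
  set C : Set Ω := {x | Di true false x = true ∧ Di false true x = false} with hC
  set GC : Set Ω := {x | Di true true x = true ∧ Di true false x = false} with hGC
  have hA10m : MeasurableSet[MeasurableSpace.comap (fun ω => (fun z z' => Di z z' ω))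
      MeasurableSpace.pi] A10 := by
    refine ⟨{f : Bool → Bool → Bool | f true false = true}, ?_, rfl⟩
    show MeasurableSet ((fun f : Bool → Bool → Bool => f true false) ⁻¹' {true})
    exact ((measurable_pi_apply (false : Bool)).comp (measurable_pi_apply (true : Bool)))
      (measurableSet_singleton true)
  have hA11m : MeasurableSet[MeasurableSpace.comap (fun ω => (fun z z' => Di z z' ω))
      MeasurableSpace.pi] A11 := by
    refine ⟨{f : Bool → Bool → Bool | f true true = true}, ?_, rfl⟩
    show MeasurableSet ((fun f : Bool → Bool → Bool => f true true) ⁻¹' {true})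
    exact ((measurable_pi_apply (true : Bool)).comp (measurable_pi_apply (true : Bool)))
      (measurableSet_singleton true)
  have hB10m : MeasurableSet[MeasurableSpace.comap (fun ω => (Zi ω, Zj ω))
      Prod.instMeasurableSpace] B10 := by
    refine ⟨{((true : Bool), (false : Bool))}, measurableSet_singleton _, ?_⟩
    ext ω
    simp [hB10, Prod.ext_iff]
  have hB11m : MeasurableSet[MeasurableSpace.comap (fun ω => (Zi ω, Zj ω))
      Prod.instMeasurableSpace] B11 := by
    refine ⟨{((true : Bool), (true : Bool))}, measurableSet_singleton _, ?_⟩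
    ext ω
    simp [hB11, Prod.ext_iff]
  have h10 := hkey A10 B10 hA10m hB10m
  have h11 := hkey A11 B11 hA11m hB11m
  -- pointwise identification of the integrands
  have hf10 : (fun ω => bInd (Di (Zi ω) (Zj ω) ω) * Set.indicator B10 (fun _ => (1:ℝ)) ω)
      = Set.indicator (A10 ∩ B10) (fun _ => (1:ℝ)) := by
    funext ω
    by_cases hb : ω ∈ B10
    · have h1 : Zi ω = true := hb.1
      have h2 : Zj ω = false := hb.2
      rw [Set.indicator_of_mem hb, h1, h2]
      by_cases ha : ω ∈ A10
      · rw [Set.indicator_of_mem (Set.mem_inter ha hb)]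
        have hd : Di true false ω = true := ha
        simp [bInd, hd]
      · rw [Set.indicator_of_notMem (fun h => ha h.1)]
        have hd : Di true false ω = false := by
          cases h : Di true false ω
          · rfl
          · exact absurd h ha
        simp [bInd, hd]
    · rw [Set.indicator_of_notMem hb, Set.indicator_of_notMem (fun h => hb h.2), mul_zero]
  have hf11 : (fun ω => bInd (Di (Zi ω) (Zj ω) ω) * Set.indicator B11 (fun _ => (1:ℝ)) ω)
      = Set.indicator (A11 ∩ B11) (fun _ => (1:ℝ)) := by
    funext ω
    by_cases hb : ω ∈ B11
    · have h1 : Zi ω = true := hb.1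
      have h2 : Zj ω = true := hb.2
      rw [Set.indicator_of_mem hb, h1, h2]
      by_cases ha : ω ∈ A11
      · rw [Set.indicator_of_mem (Set.mem_inter ha hb)]
        have hd : Di true true ω = true := ha
        simp [bInd, hd]
      · rw [Set.indicator_of_notMem (fun h => ha h.1)]
        have hd : Di true true ω = false := by
          cases h : Di true true ω
          · rfl
          · exact absurd h ha
        simp [bInd, hd]
    · rw [Set.indicator_of_notMem hb, Set.indicator_of_notMem (fun h => hb h.2), mul_zero]
  -- a.e. identification of the compliance indicators
  have hCA : (fun ω' => Set.indicator C (fun _ => (1:ℝ)) ω')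
      =ᵐ[P] Set.indicator A10 (fun _ => (1:ℝ)) := by
    filter_upwards [hosn] with ω h
    simp [Set.indicator_apply, hC, hA10, h.2]
  have hsum : Set.indicator A11 (fun _ => (1:ℝ))
      =ᵐ[P] (fun ω => Set.indicator C (fun _ => (1:ℝ)) ω + Set.indicator GC (fun _ => (1:ℝ)) ω) := by
    filter_upwards [hosn, hmono] with ω h1 h2
    have hd01 : Di false true ω = false := h1.2
    have hmx : Di true false ω ≤ Di true true ω := h2.2.2
    cases hx : Di true false ω <;> cases hy : Di true true ω
    · simp [Set.indicator_apply, hA11, hC, hGC, hx, hy]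
    · simp [Set.indicator_apply, hA11, hC, hGC, hx, hy, hd01]
    · rw [hx, hy] at hmx
      exact absurd hmx (by decide)
    · simp [Set.indicator_apply, hA11, hC, hGC, hx, hy, hd01]
  constructor
  · calc P[(fun ω => bInd (Di (Zi ω) (Zj ω) ω) * Set.indicator B10 (fun _ => (1:ℝ)) ω)|m]
        = P⟦A10 ∩ B10|m⟧ := by rw [hf10]
      _ =ᵐ[P] P⟦A10|m⟧ * P⟦B10|m⟧ := h10
      _ =ᵐ[P] fun ω => (P[(fun ω' => Set.indicator C (fun _ => (1:ℝ)) ω')|m]) ω * p10 ω := by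
          have h1 : P[(fun ω' => Set.indicator C (fun _ => (1:ℝ)) ω')|m] =ᵐ[P] P⟦A10|m⟧ :=
            condExp_congr_ae hCA
          filter_upwards [h1, hp10] with ω e1 e2
          rw [Pi.mul_apply, e1, e2]

  · calc P[(fun ω => bInd (Di (Zi ω) (Zj ω) ω) * Set.indicator B11 (fun _ => (1:ℝ)) ω)|m]
        = P⟦A11 ∩ B11|m⟧ := by rw [hf11]
      _ =ᵐ[P] P⟦A11|m⟧ * P⟦B11|m⟧ := h11
      _ =ᵐ[P] fun ω => ((P[(fun ω' => Set.indicator C (fun _ => (1:ℝ)) ω')|m]) ω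
            + (P[(fun ω' => Set.indicator GC (fun _ => (1:ℝ)) ω')|m]) ω) * p11 ω := by
          have hCi : Integrable (Set.indicator C (fun _ => (1:ℝ))) P := by
            apply (integrable_const (1:ℝ)).indicator
            exact ((hDimeas true false) (measurableSet_singleton true)).inter
              ((hDimeas false true) (measurableSet_singleton false))
          have hGCi : Integrable (Set.indicator GC (fun _ => (1:ℝ))) P := by
            apply (integrable_const (1:ℝ)).indicator
            exact ((hDimeas true true) (measurableSet_singleton true)).inter
              ((hDimeas true false) (measurableSet_singleton false))
          have h1 : P⟦A11|m⟧ =ᵐ[P]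
              (fun ω => (P[(fun ω' => Set.indicator C (fun _ => (1:ℝ)) ω')|m]) ω
                + (P[(fun ω' => Set.indicator GC (fun _ => (1:ℝ)) ω')|m]) ω) := by
            refine (condExp_congr_ae hsum).trans ?_
            exact condExp_add hCi hGCi m
          filter_upwards [h1, hp11] with ω e1 e2
          rw [Pi.mul_apply, e1, e2]
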